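/- Let p > 0 be a real number and let f : ℝ → ℝ be continuous with f(0) ≠ 0. Suppose there exists g : ℝ → ℝ such that f(x)·f(y) = g((|x|^p + |y|^p)^(1/p)) for all x, y ∈ ℝ. Then there exists a constant c ∈ ℝ such that f(x) = f(0)·exp(c·|x|^p) for all x ∈ ℝ. -/
import Mathlib

/-- A continuous density `f` with `f 0 ≠ 0` whose independent product
`f(x)·f(y)` is a function of the `p`-norm `(|x|^p + |y|^p)^(1/p)` alone must be
of the `p`-normal form `f(x) = f(0)·exp(c·|x|^p)`. -/
theorem p_isotropic_product_is_p_normal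
    (p : ℝ) (hp : 0 < p) (f : ℝ → ℝ) (hf : Continuous f) (hf0 : f 0 ≠ 0)
    (h : ∃ g : ℝ → ℝ, ∀ x y : ℝ, f x * f y = g ((|x| ^ p + |y| ^ p) ^ (1 / p))) :
    ∃ c : ℝ, ∀ x : ℝ, f x = f 0 * Real.exp (c * |x| ^ p) := by
  obtain ⟨g, hg⟩ := h
  have hip : (0:ℝ) ≤ 1 / p := by positivity
  have habs : ∀ t : ℝ, 0 ≤ t → (t ^ p) ^ (1/p) = t := by
    intro t ht
    rw [← Real.rpow_mul ht, mul_one_div_cancel hp.ne', Real.rpow_one]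
  have hkey : ∀ x y : ℝ, f x * f y = f ((|x| ^ p + |y| ^ p) ^ (1 / p)) * f 0 := by
    intro x y
    rw [hg x y]
    set z := (|x| ^ p + |y| ^ p) ^ (1 / p) with hz
    have hz0 : 0 ≤ z := Real.rpow_nonneg (by positivity) _
    have h2 := hg z 0
    rw [abs_of_nonneg hz0, abs_zero, Real.zero_rpow hp.ne', add_zero, habs z hz0] at h2
    exact h2.symm
  -- H : the multiplicative Cauchy function on [0, ∞)
  set H : ℝ → ℝ := fun t => f (|t| ^ (1/p)) / f 0 with hH
  have hHcont : Continuous H := by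
    apply Continuous.div_const
    exact hf.comp ((Real.continuous_rpow_const hip).comp continuous_abs)
  have hH0 : H 0 = 1 := by
    simp only [hH, abs_zero, Real.zero_rpow (one_div_ne_zero hp.ne'), div_self hf0]
  have hHadd : ∀ s t : ℝ, 0 ≤ s → 0 ≤ t → H (s + t) = H s * H t := by
    intro s t hs ht
    have e : ∀ u : ℝ, 0 ≤ u → |u ^ (1/p)| ^ p = u := by
      intro u hu
      rw [abs_of_nonneg (Real.rpow_nonneg hu _), ← Real.rpow_mul hu,
        one_div_mul_cancel hp.ne', Real.rpow_one]
    have h2 := hkey (s ^ (1/p)) (t ^ (1/p))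
    rw [e s hs, e t ht] at h2
    simp only [hH, abs_of_nonneg hs, abs_of_nonneg ht, abs_of_nonneg (by linarith : (0:ℝ) ≤ s + t)]
    rw [div_mul_div_comm, h2, mul_div_mul_right _ _ hf0]
  have hHsq : ∀ t : ℝ, 0 ≤ t → H t = H (t/2) ^ 2 := by
    intro t ht
    have := hHadd (t/2) (t/2) (by linarith) (by linarith)
    rw [add_halves] at this
    rw [this]; ring
  have hHpos : ∀ t : ℝ, 0 < H t := by
    have key : ∀ t : ℝ, 0 ≤ t → 0 < H t := by
      intro t ht
      rcases lt_or_eq_of_le (sq_nonneg (H (t/2))) with hlt | heq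
      · rw [hHsq t ht]; exact hlt
      · exfalso
        have hz : H t = 0 := by rw [hHsq t ht, ← heq]
        have hn : ∀ n : ℕ, H (t / 2 ^ n) = 0 := by
          intro n
          induction n with
          | zero => simpa using hz
          | succ n ih =>
            have htn : 0 ≤ t / 2 ^ n := by positivity
            have h3 := hHsq (t / 2 ^ n) htn
            have e2 : t / 2 ^ n / 2 = t / 2 ^ (n+1) := by ring
            rw [ih, e2] at h3
            exact pow_eq_zero_iff (n := 2) (by norm_num) |>.mp h3.symm
        have hlim : Filter.Tendsto (fun n : ℕ => t / 2 ^ n) Filter.atTop (nhds 0) := by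
          have := (tendsto_pow_atTop_nhds_zero_of_lt_one (by norm_num : (0:ℝ) ≤ 1/2)
              (by norm_num : (1:ℝ)/2 < 1)).const_mul t
          rw [mul_zero] at this
          refine this.congr fun n => ?_
          rw [div_pow]; ring
        have hten : Filter.Tendsto (fun n : ℕ => H (t / 2 ^ n)) Filter.atTop (nhds 1) := by
          have := (hHcont.tendsto 0).comp hlim
          rwa [hH0] at this
        rw [Filter.tendsto_congr hn] at hten
        exact one_ne_zero (tendsto_nhds_unique tendsto_const_nhds hten).symm
    intro t
    have : H t = H |t| := by simp only [hH, abs_abs]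
    rw [this]; exact key _ (abs_nonneg t)
  -- the logarithm L
  set L : ℝ → ℝ := fun t => Real.log (H t) with hL
  have hLcont : Continuous L :=
    Real.continuousOn_log.comp_continuous hHcont fun t => (hHpos t).ne'
  have hL0 : L 0 = 0 := by rw [hL]; simp [hH0]
  have hLadd : ∀ s t : ℝ, 0 ≤ s → 0 ≤ t → L (s + t) = L s + L t := by
    intro s t hs ht
    rw [hL]
    simp only
    rw [hHadd s t hs ht, Real.log_mul (hHpos s).ne' (hHpos t).ne']
  -- extend to an additive function on ℝ
  set A : ℝ → ℝ := fun t => if t ≤ 0 then -L (-t) else L t with hA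
  have hAeq : ∀ t : ℝ, 0 ≤ t → A t = L t := by
    intro t ht
    rw [hA]
    simp only
    rcases eq_or_lt_of_le ht with rfl | ht'
    · simp [hL0]
    · rw [if_neg (not_le.mpr ht')]
  have hAadd : ∀ s t : ℝ, A (s + t) = A s + A t := by
    have main : ∀ s t : ℝ, 0 ≤ s → t ≤ 0 → A (s + t) = A s + A t := by
      intro s t hs ht
      have hAt : A t = -L (-t) := by rw [hA]; simp only [if_pos ht]
      rcases le_total 0 (s + t) with hst | hst
      · have h4 : L s = L (s + t) + L (-t) := by
          have := hLadd (s + t) (-t) hst (by linarith)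
          rw [show s + t + -t = s by ring] at this
          exact this
        rw [hAeq _ hst, hAeq _ hs, hAt]; linarith
      · have h4 : L (-t) = L (-(s+t)) + L s := by
          have := hLadd (-(s + t)) s (by linarith) hs
          rw [show -(s + t) + s = -t by ring] at this
          exact this
        have hAst : A (s + t) = -L (-(s+t)) := by rw [hA]; simp only [if_pos hst]
        rw [hAst, hAeq _ hs, hAt]; linarith
    intro s t
    rcases le_total 0 s with hs | hs
    · rcases le_total 0 t with ht | ht
      · rw [hAeq _ hs, hAeq _ ht, hAeq _ (by linarith), hLadd s t hs ht]
      · exact main s t hs ht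
    · rcases le_total 0 t with ht | ht
      · rw [add_comm, add_comm (A s)]; exact main t s ht hs
      · have hAs : A s = -L (-s) := by rw [hA]; simp only [if_pos hs]
        have hAt : A t = -L (-t) := by rw [hA]; simp only [if_pos ht]
        have hAst : A (s + t) = -L (-(s+t)) := by
          rw [hA]; simp only [if_pos (by linarith : s + t ≤ 0)]
        have := hLadd (-s) (-t) (by linarith) (by linarith)
        rw [show -s + -t = -(s + t) by ring] at this
        rw [hAs, hAt, hAst, this]; ring
  have hAcont : Continuous A := by
    rw [hA]
    exact Continuous.if_le ((hLcont.comp continuous_neg).neg) hLcont continuous_id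
      continuous_const (fun t ht => by simp [ht, hL0])
  -- additive + continuous ⇒ linear
  set φ : ℝ →+ ℝ := AddMonoidHom.mk' A hAadd with hφ
  have hlin : ∀ t : ℝ, A t = t * A 1 := by
    intro t
    have key : ∀ u, (φ.toRealLinearMap hAcont) u = A u :=
      fun u => congrFun (φ.coe_toRealLinearMap hAcont) u
    have h5 := (φ.toRealLinearMap hAcont).map_smul t 1
    simp only [smul_eq_mul, mul_one] at h5
    rw [key, key] at h5
    exact h5
  refine ⟨A 1, fun x => ?_⟩
  -- compute f x
  have hxabs : f x = f |x| := by
    have h6 := hkey x 0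
    rw [abs_zero, Real.zero_rpow hp.ne', add_zero, habs |x| (abs_nonneg x)] at h6
    exact mul_right_cancel₀ hf0 h6
  have hHx : H (|x| ^ p) = f |x| / f 0 := by
    rw [hH]
    simp only
    rw [abs_of_nonneg (Real.rpow_nonneg (abs_nonneg x) p), habs |x| (abs_nonneg x)]
  have hup : (0:ℝ) ≤ |x| ^ p := Real.rpow_nonneg (abs_nonneg x) p
  have : f x = f 0 * H (|x| ^ p) := by
    rw [hHx, hxabs]; field_simp
  rw [this, ← Real.exp_log (hHpos (|x| ^ p))]
  show f 0 * Real.exp (L (|x| ^ p)) = f 0 * Real.exp (A 1 * |x| ^ p)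
  rw [← hAeq _ hup, hlin]
  ring_nf
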